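/- Let V be a finite type with at least two elements, let α > 0 and τ ≥ 1 be real numbers, and let d, δ : V → V → ℝ be symmetric functions vanishing exactly on the diagonal and positive off the diagonal, such that δ(v,w) ≤ d(v,w) ≤ τ·δ(v,w) for all v ≠ w. Let L_d and L_δ be the Laplacian matrices with weight functions d(v,w)^{−α} and δ(v,w)^{−α} respectively (off the diagonal, and 0 on the diagonal). Then for every index k, the k-th smallest eigenvalue λ_k(L_d) of L_d satisfies τ^{−α}·λ_k(L_δ) ≤ λ_k(L_d) ≤ λ_k(L_δ), where λ_k(L_δ) is the k-th smallest eigenvalue of L_δ. -/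

import Mathlib

open scoped Matrix

/-- The Laplacian matrix of a weight function `w : V → V → ℝ`:
diagonal entries `∑_{u ≠ v} w v u`, off-diagonal entries `-w v u`. -/
def lapMatrix (V : Type*) [Fintype V] [DecidableEq V] (w : V → V → ℝ) :
    Matrix V V ℝ :=
  fun v u => if v = u then ∑ x ∈ Finset.univ.erase v, w v x else -w v u

/-- The eigenvalues of a Hermitian (real symmetric) matrix, listed in
nondecreasing order with multiplicity; `sortedEigenvalues hA k` is the
`k`-th smallest eigenvalue of `A`. -/
noncomputable def sortedEigenvalues {V : Type*} [Fintype V] [DecidableEq V]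
    {A : Matrix V V ℝ} (hA : A.IsHermitian) : Fin (Fintype.card V) → ℝ :=
  (hA.eigenvalues ∘ (Fintype.equivFin V).symm) ∘
    Tuple.sort (hA.eigenvalues ∘ (Fintype.equivFin V).symm)


open Finset
section RayleighAux

section Rayleigh

variable {n : ℕ} {E : Type*} [NormedAddCommGroup E] [InnerProductSpace ℝ E]

lemma my_rayleigh_le (c : OrthonormalBasis (Fin n) ℝ E) (T : E →ₗ[ℝ] E)
    (μ : Fin n → ℝ) (hT : ∀ i, T (c i) = μ i • c i) (S : Finset (Fin n)) (m : ℝ)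
    (hμ : ∀ i ∈ S, μ i ≤ m) (x : E)
    (hx : x ∈ Submodule.span ℝ (Set.range fun i : S => c i)) :
    (inner ℝ x (T x) : ℝ) ≤ m * inner ℝ x x := by
  set r : Fin n → ℝ := fun i => inner ℝ (c i) x with hr
  have hr0 : ∀ i ∉ S, r i = 0 := by
    intro i hi
    induction hx using Submodule.span_induction with
    | mem y hy =>
        obtain ⟨j, rfl⟩ := hy
        have : (i : Fin n) ≠ (j : Fin n) := fun h => hi (h ▸ j.2)
        simpa [hr] using c.orthonormal.2 this
    | zero => simp [hr]
    | add y z hy hz hy' hz' => simp [hr, inner_add_right, hy', hz']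
    | smul a y hy hy' => simp [hr, inner_smul_right, hy']
  have hTx : T x = ∑ i, (μ i * r i) • c i := by
    conv_lhs => rw [← c.sum_repr' x]
    rw [map_sum]
    refine Finset.sum_congr rfl fun i _ => ?_
    rw [map_smul, hT, smul_smul, mul_comm]
  have h1 : (inner ℝ x (T x) : ℝ) = ∑ i, μ i * r i ^ 2 := by
    rw [hTx, inner_sum]
    refine Finset.sum_congr rfl fun i _ => ?_
    rw [real_inner_smul_right, real_inner_comm]
    ring
  have h2 : (inner ℝ x x : ℝ) = ∑ i, r i ^ 2 := by
    nth_rewrite 2 [← c.sum_repr' x]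
    rw [inner_sum]
    refine Finset.sum_congr rfl fun i _ => ?_
    simp only [hr, real_inner_smul_right, sq]
    rw [real_inner_comm x (c i)]
  rw [h1, h2, Finset.mul_sum]
  refine Finset.sum_le_sum fun i _ => ?_
  by_cases hi : i ∈ S
  · exact mul_le_mul_of_nonneg_right (hμ i hi) (sq_nonneg _)
  · rw [hr0 i hi]; simp

lemma my_rayleigh_ge (c : OrthonormalBasis (Fin n) ℝ E) (T : E →ₗ[ℝ] E)
    (μ : Fin n → ℝ) (hT : ∀ i, T (c i) = μ i • c i) (S : Finset (Fin n)) (m : ℝ)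
    (hμ : ∀ i ∈ S, m ≤ μ i) (x : E)
    (hx : x ∈ Submodule.span ℝ (Set.range fun i : S => c i)) :
    m * inner ℝ x x ≤ (inner ℝ x (T x) : ℝ) := by
  have := my_rayleigh_le c (-T) (-μ) (fun i => by simp [hT i]) S (-m)
    (fun i hi => neg_le_neg (hμ i hi)) x hx
  simp only [LinearMap.neg_apply, inner_neg_right, Pi.neg_apply, neg_mul] at this
  linarith

lemma my_finrank_span (c : OrthonormalBasis (Fin n) ℝ E) (S : Finset (Fin n)) :
    Module.finrank ℝ (Submodule.span ℝ (Set.range fun i : S => c i)) = S.card := by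
  have li : LinearIndependent ℝ (fun i : S => c i) :=
    (c.orthonormal.linearIndependent).comp _ Subtype.val_injective
  rw [finrank_span_eq_card li, Fintype.card_coe]

end Rayleigh


end RayleighAux

section EigCompAux


variable {V : Type*} [Fintype V] [DecidableEq V]

lemma sortedEigenvalues_monotone {A : Matrix V V ℝ} (hA : A.IsHermitian) :
    Monotone (sortedEigenvalues hA) :=
  Tuple.monotone_sort (hA.eigenvalues ∘ (Fintype.equivFin V).symm)

/-- reindexed eigenbasis: `eigBasis hA i` is the eigenvector for the `i`-th sorted eigenvalue. -/
noncomputable def eigBasis {A : Matrix V V ℝ} (hA : A.IsHermitian) :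
    OrthonormalBasis (Fin (Fintype.card V)) ℝ (EuclideanSpace ℝ V) :=
  hA.eigenvectorBasis.reindex
    ((Tuple.sort (hA.eigenvalues ∘ (Fintype.equivFin V).symm)).trans
      (Fintype.equivFin V).symm).symm

lemma eigBasis_apply_eq {A : Matrix V V ℝ} (hA : A.IsHermitian) (i : Fin (Fintype.card V)) :
    Matrix.toEuclideanLin A (eigBasis hA i) = sortedEigenvalues hA i • eigBasis hA i := by
  have h1 := hA.mulVec_eigenvectorBasis
    ((Fintype.equivFin V).symm (Tuple.sort (hA.eigenvalues ∘ (Fintype.equivFin V).symm) i))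
  ext v
  have h2 := congrFun h1 v
  simpa [eigBasis, Matrix.toEuclideanLin_apply, OrthonormalBasis.reindex_apply,
    sortedEigenvalues, WithLp.equiv] using h2

lemma inner_toEuclideanLin (A : Matrix V V ℝ) (x : EuclideanSpace ℝ V) :
    (inner ℝ x (Matrix.toEuclideanLin A x) : ℝ)
      = (WithLp.equiv 2 (V → ℝ) x) ⬝ᵥ (A *ᵥ WithLp.equiv 2 (V → ℝ) x) := by
  rw [Matrix.toEuclideanLin_apply]
  simp [PiLp.inner_apply, dotProduct, WithLp.equiv, Equiv.refl_apply]
  exact Finset.sum_congr rfl fun i _ => mul_comm _ _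

lemma eig_comp {A B : Matrix V V ℝ} (hA : A.IsHermitian) (hB : B.IsHermitian)
    {c : ℝ} (hc : 0 < c)
    (h : ∀ x : V → ℝ, c * (x ⬝ᵥ B *ᵥ x) ≤ x ⬝ᵥ A *ᵥ x)
    (k : Fin (Fintype.card V)) :
    c * sortedEigenvalues hB k ≤ sortedEigenvalues hA k := by
  classical
  let S1 : Finset (Fin (Fintype.card V)) := Finset.Ici k
  let S2 : Finset (Fin (Fintype.card V)) := Finset.Iic k
  let W1 := Submodule.span ℝ (Set.range fun i : S1 => eigBasis hB i)
  let W2 := Submodule.span ℝ (Set.range fun i : S2 => eigBasis hA i)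
  have hcard : S1.card + S2.card = Fintype.card V + 1 := by
    have hu : S1 ∪ S2 = Finset.univ := by
      ext i; simp only [S1, S2, Finset.mem_union, Finset.mem_Ici, Finset.mem_Iic,
        Finset.mem_univ, iff_true]
      exact le_total k i
    have hi : S1 ∩ S2 = {k} := by
      ext i; simp only [S1, S2, Finset.mem_inter, Finset.mem_Ici, Finset.mem_Iic,
        Finset.mem_singleton]
      constructor
      · rintro ⟨h1, h2⟩; exact le_antisymm h2 h1
      · rintro rfl; exact ⟨le_rfl, le_rfl⟩
    have := Finset.card_union_add_card_inter S1 S2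
    rw [hu, hi] at this
    simpa [Finset.card_univ, Fintype.card_fin] using this.symm
  have hfin : 0 < Module.finrank ℝ ↥(W1 ⊓ W2) := by
    have hsum := Submodule.finrank_sup_add_finrank_inf_eq W1 W2
    have hle : Module.finrank ℝ ↥(W1 ⊔ W2) ≤ Fintype.card V := by
      have h1 := Submodule.finrank_le (W1 ⊔ W2)
      rwa [finrank_euclideanSpace] at h1
    rw [my_finrank_span, my_finrank_span] at hsum
    omega
  obtain ⟨y, hy0⟩ := Module.finrank_pos_iff_exists_ne_zero.mp hfin
  obtain ⟨x, hx⟩ := y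
  have hx1 : x ∈ W1 := hx.1
  have hx2 : x ∈ W2 := hx.2
  have hx0 : x ≠ 0 := fun h0 => hy0 (Subtype.ext h0)
  have hxx : (0 : ℝ) < inner ℝ x x := lt_of_le_of_ne real_inner_self_nonneg (Ne.symm (inner_self_ne_zero.mpr hx0))
  have hb : sortedEigenvalues hB k * inner ℝ x x ≤ (inner ℝ x (Matrix.toEuclideanLin B x) : ℝ) :=
    my_rayleigh_ge (eigBasis hB) _ (sortedEigenvalues hB) (eigBasis_apply_eq hB) S1 _
      (fun i hi => sortedEigenvalues_monotone hB (Finset.mem_Ici.mp hi)) x hx1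
  have ha : (inner ℝ x (Matrix.toEuclideanLin A x) : ℝ) ≤ sortedEigenvalues hA k * inner ℝ x x :=
    my_rayleigh_le (eigBasis hA) _ (sortedEigenvalues hA) (eigBasis_apply_eq hA) S2 _
      (fun i hi => sortedEigenvalues_monotone hA (Finset.mem_Iic.mp hi)) x hx2
  have hmid : c * (inner ℝ x (Matrix.toEuclideanLin B x) : ℝ)
      ≤ (inner ℝ x (Matrix.toEuclideanLin A x) : ℝ) := by
    rw [inner_toEuclideanLin, inner_toEuclideanLin]
    exact h _
  have key : (c * sortedEigenvalues hB k) * inner ℝ x x ≤ sortedEigenvalues hA k * inner ℝ x x := by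
    have := mul_le_mul_of_nonneg_left hb hc.le
    rw [← mul_assoc] at this
    exact this.trans (hmid.trans ha)
  exact le_of_mul_le_mul_right key hxx


end EigCompAux

section LapAux

variable {V : Type*} [Fintype V] [DecidableEq V]

lemma lap_quad (w : V → V → ℝ) (hsym : ∀ v u, w v u = w u v) (x : V → ℝ) :
    x ⬝ᵥ (lapMatrix V w *ᵥ x) = (∑ v, ∑ u, w v u * (x v - x u) ^ 2) / 2 := by
  have expand : x ⬝ᵥ (lapMatrix V w *ᵥ x) = ∑ v, ∑ u, w v u * x v * (x v - x u) := by
    refine Finset.sum_congr rfl fun v _ => ?_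
    have hv : x v * (lapMatrix V w *ᵥ x) v = ∑ u ∈ univ.erase v, w v u * x v * (x v - x u) := by
      have hmv : (lapMatrix V w *ᵥ x) v
          = (∑ u ∈ univ.erase v, w v u) * x v + ∑ u ∈ univ.erase v, -(w v u) * x u := by
        unfold lapMatrix Matrix.mulVec dotProduct
        rw [← Finset.add_sum_erase _ _ (Finset.mem_univ v)]
        simp only [if_pos rfl]
        congr 1
        refine Finset.sum_congr rfl fun u hu => ?_
        rw [if_neg (Ne.symm (Finset.ne_of_mem_erase hu))]
      rw [hmv, Finset.sum_mul, mul_add, Finset.mul_sum, Finset.mul_sum,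
        ← Finset.sum_add_distrib]
      exact Finset.sum_congr rfl fun u hu => by ring
    rw [hv]
    exact Finset.sum_erase _ (by ring)
  rw [expand, eq_div_iff (two_ne_zero (α := ℝ))]
  have sw : ∑ v, ∑ u, w v u * x v * (x v - x u) = ∑ v, ∑ u, w v u * x u * (x u - x v) := by
    rw [Finset.sum_comm]
    exact Finset.sum_congr rfl fun v _ => Finset.sum_congr rfl fun u _ => by rw [hsym]
  rw [mul_two]
  nth_rewrite 2 [sw]
  rw [← Finset.sum_add_distrib]
  refine Finset.sum_congr rfl fun v _ => ?_
  rw [← Finset.sum_add_distrib]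
  exact Finset.sum_congr rfl fun u _ => by ring

lemma lap_quad_mono {w1 w2 : V → V → ℝ} (h1 : ∀ v u, w1 v u = w1 u v)
    (h2 : ∀ v u, w2 v u = w2 u v) {c : ℝ}
    (hle : ∀ v u, c * w1 v u ≤ w2 v u) (x : V → ℝ) :
    c * (x ⬝ᵥ (lapMatrix V w1 *ᵥ x)) ≤ x ⬝ᵥ (lapMatrix V w2 *ᵥ x) := by
  rw [lap_quad _ h1 x, lap_quad _ h2 x, mul_div_assoc']
  apply div_le_div_of_nonneg_right ?_ (by norm_num)
  rw [Finset.mul_sum]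
  refine Finset.sum_le_sum fun v _ => ?_
  rw [Finset.mul_sum]
  refine Finset.sum_le_sum fun u _ => ?_
  rw [← mul_assoc, mul_assoc c, ← mul_assoc]
  exact mul_le_mul_of_nonneg_right (hle v u) (sq_nonneg _)


end LapAux

theorem stmt13 (V : Type*) [Fintype V] [DecidableEq V] [Nontrivial V]
    (α τ : ℝ) (hα : 0 < α) (hτ : 1 ≤ τ)
    (d δ : V → V → ℝ)
    (hdsym : ∀ v w, d v w = d w v) (hδsym : ∀ v w, δ v w = δ w v)
    (hd0 : ∀ v w, d v w = 0 ↔ v = w) (hδ0 : ∀ v w, δ v w = 0 ↔ v = w)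
    (hdpos : ∀ v w, v ≠ w → 0 < d v w) (hδpos : ∀ v w, v ≠ w → 0 < δ v w)
    (henc : ∀ v w, v ≠ w → δ v w ≤ d v w ∧ d v w ≤ τ * δ v w)
    (hLd : (lapMatrix V fun v w => if v = w then 0 else d v w ^ (-α)).IsHermitian)
    (hLδ : (lapMatrix V fun v w => if v = w then 0 else δ v w ^ (-α)).IsHermitian)
    (k : Fin (Fintype.card V)) :
    τ ^ (-α) * sortedEigenvalues hLδ k ≤ sortedEigenvalues hLd k ∧
      sortedEigenvalues hLd k ≤ sortedEigenvalues hLδ k := by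
  classical
  have hτ0 : (0:ℝ) < τ := lt_of_lt_of_le one_pos hτ
  have hc : (0:ℝ) < τ ^ (-α) := Real.rpow_pos_of_pos hτ0 _
  have hsymd : ∀ v u : V, (if v = u then 0 else d v u ^ (-α))
      = (if u = v then 0 else d u v ^ (-α)) := by
    intro v u
    rcases eq_or_ne v u with rfl | h
    · simp
    · rw [if_neg h, if_neg (Ne.symm h), hdsym]
  have hsymδ : ∀ v u : V, (if v = u then 0 else δ v u ^ (-α))
      = (if u = v then 0 else δ u v ^ (-α)) := by
    intro v u
    rcases eq_or_ne v u with rfl | h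
    · simp
    · rw [if_neg h, if_neg (Ne.symm h), hδsym]
  have hle1 : ∀ v u : V, τ ^ (-α) * (if v = u then 0 else δ v u ^ (-α))
      ≤ (if v = u then 0 else d v u ^ (-α)) := by
    intro v u
    rcases eq_or_ne v u with rfl | h
    · simp
    · rw [if_neg h, if_neg h]
      have h2 : (τ * δ v u) ^ (-α) ≤ d v u ^ (-α) :=
        Real.rpow_le_rpow_of_nonpos (hdpos v u h) (henc v u h).2 (neg_nonpos.mpr hα.le)
      rwa [Real.mul_rpow hτ0.le (hδpos v u h).le] at h2
  have hle2 : ∀ v u : V, 1 * (if v = u then 0 else d v u ^ (-α))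
      ≤ (if v = u then 0 else δ v u ^ (-α)) := by
    intro v u
    rw [one_mul]
    rcases eq_or_ne v u with rfl | h
    · simp
    · rw [if_neg h, if_neg h]
      exact Real.rpow_le_rpow_of_nonpos (hδpos v u h) (henc v u h).1 (neg_nonpos.mpr hα.le)
  constructor
  · exact eig_comp hLd hLδ hc (fun x => lap_quad_mono hsymδ hsymd hle1 x) k
  · have := eig_comp hLδ hLd one_pos (fun x => lap_quad_mono hsymd hsymδ hle2 x) k
    rwa [one_mul] at this
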